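/- Fix κ ≥ 0 and c > 0. For σ > 0 define σ̃(σ) = √(σ² + κ²), let z*(σ) be the unique solution of φ(z) − z·Φᶜ(z) = (σ̃(σ)/σ²)·c, and let τ̃*(σ) = σ̃(σ)·z*(σ). Suppose σ₁ > σ₂ > 0 and c is small enough that τ̃*(σ₂) > 0 (equivalently, c < (σ₂²/σ̃(σ₂))·(2π)^(−1/2)). Then τ̃*(σ₁) > τ̃*(σ₂). -/

import Mathlib

set_option maxHeartbeats 400000

open MeasureTheory ProbabilityTheory Real

noncomputable def stdPdf (x : ℝ) : ℝ := (Real.sqrt (2 * Real.pi))⁻¹ * Real.exp (-(x ^ 2) / 2)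

noncomputable def stdCdf (x : ℝ) : ℝ := ∫ u in Set.Iic x, stdPdf u

noncomputable def stdCcdf (x : ℝ) : ℝ := 1 - stdCdf x

noncomputable def hazard (x : ℝ) : ℝ := stdPdf x / stdCcdf x

lemma stdPdf_pos (x : ℝ) : 0 < stdPdf x := by
  unfold stdPdf
  positivity

lemma continuous_stdPdf : Continuous stdPdf := by
  unfold stdPdf
  fun_prop

lemma integrable_stdPdf : Integrable stdPdf := by
  have h : stdPdf = fun x => (Real.sqrt (2 * Real.pi))⁻¹ * Real.exp (-(1/2) * x ^ 2) := by
    funext x; unfold stdPdf; ring_nf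
  rw [h]
  exact (integrable_exp_neg_mul_sq (by norm_num)).const_mul _

lemma integral_stdPdf : ∫ x, stdPdf x = 1 := by
  have h : ∀ x, stdPdf x = (Real.sqrt (2 * Real.pi))⁻¹ * Real.exp (-(1/2) * x ^ 2) := by
    intro x; unfold stdPdf; ring_nf
  simp_rw [h]
  rw [integral_const_mul, integral_gaussian]
  have : Real.pi / (1/2) = 2 * Real.pi := by ring
  rw [this, inv_mul_cancel₀]
  positivity

lemma stdCcdf_eq (x : ℝ) : stdCcdf x = ∫ u in Set.Ioi x, stdPdf u := by
  have h := MeasureTheory.integral_add_compl (measurableSet_Iic (a := x)) integrable_stdPdf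
  rw [Set.compl_Iic] at h
  unfold stdCcdf stdCdf
  rw [← integral_stdPdf]
  linarith [h]

lemma stdCcdf_pos (x : ℝ) : 0 < stdCcdf x := by
  rw [stdCcdf_eq]
  rw [setIntegral_pos_iff_support_of_nonneg_ae]
  · have : Function.support stdPdf = Set.univ := by
      ext y; simp [Function.mem_support, (stdPdf_pos y).ne']
    rw [this, Set.univ_inter]
    simp [Real.volume_Ioi]
  · exact Filter.Eventually.of_forall (fun y => (stdPdf_pos y).le)
  · exact integrable_stdPdf.integrableOn

lemma hasDerivAt_stdCdf (x : ℝ) : HasDerivAt stdCdf (stdPdf x) x := by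
  have heq : ∀ u, stdCdf u = (∫ t in (0:ℝ)..u, stdPdf t) + stdCdf 0 := by
    intro u
    rw [← intervalIntegral.integral_Iic_sub_Iic integrable_stdPdf.integrableOn
      integrable_stdPdf.integrableOn]
    unfold stdCdf; ring
  have h : HasDerivAt (fun u => (∫ t in (0:ℝ)..u, stdPdf t) + stdCdf 0) (stdPdf x) x := by
    refine HasDerivAt.add_const (c := stdCdf 0) ?_
    exact intervalIntegral.integral_hasDerivAt_right
      (integrable_stdPdf.intervalIntegrable)
      (continuous_stdPdf.aestronglyMeasurable.stronglyMeasurableAtFilter)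
      continuous_stdPdf.continuousAt
  have : stdCdf = fun u => (∫ t in (0:ℝ)..u, stdPdf t) + stdCdf 0 := funext heq
  rw [this]
  exact h

noncomputable def psiFn (z : ℝ) : ℝ := stdPdf z - z * stdCcdf z

lemma hasDerivAt_stdPdf (x : ℝ) : HasDerivAt stdPdf (-x * stdPdf x) x := by
  have h1 : HasDerivAt (fun x : ℝ => -(x ^ 2) / 2) (-x) x := by
    have h : HasDerivAt (fun x : ℝ => -(x ^ 2) / 2) _ x := ((hasDerivAt_pow 2 x).neg).div_const 2
    convert h using 1
    norm_num
    ring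
  have h2 := (h1.exp).const_mul (Real.sqrt (2 * Real.pi))⁻¹
  have he : -x * stdPdf x
      = (Real.sqrt (2 * Real.pi))⁻¹ * (Real.exp (-(x ^ 2) / 2) * -x) := by
    unfold stdPdf; ring
  rw [he]
  exact h2

lemma hasDerivAt_psiFn (x : ℝ) : HasDerivAt psiFn (-(stdCcdf x)) x := by
  have hccdf : HasDerivAt stdCcdf (-(stdPdf x)) x := by
    have := (hasDerivAt_stdCdf x).const_sub 1
    exact this
  have hmul : HasDerivAt (fun z => z * stdCcdf z)
      (1 * stdCcdf x + x * -(stdPdf x)) x := (hasDerivAt_id x).mul hccdf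
  have : HasDerivAt psiFn _ x := (hasDerivAt_stdPdf x).sub hmul
  convert this using 1
  ring

lemma strictAnti_psiFn : StrictAnti psiFn :=
  strictAnti_of_hasDerivAt_neg hasDerivAt_psiFn
    (fun x => neg_neg_iff_pos.mpr (stdCcdf_pos x))

lemma psiFn_zero : psiFn 0 = (Real.sqrt (2 * Real.pi))⁻¹ := by
  unfold psiFn stdPdf
  norm_num

/-- A more diverse applicant pool yields a higher optimal threshold. With noise level
`κ ≥ 0`, `σ̃(σ) = √(σ² + κ²)`, and `z*(σ)` the unique solution of
`φ(z) − z·Φᶜ(z) = (σ̃(σ)/σ²)·c`, if `σ₁ > σ₂ > 0` and `c` satisfies the viability condition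
`c < (σ₂²/σ̃(σ₂))·(2π)^(−1/2)`, then `τ̃*(σ₁) = σ̃(σ₁)·z*(σ₁) > σ̃(σ₂)·z*(σ₂) = τ̃*(σ₂)`. -/
theorem optimal_threshold_mono_in_sigma (κ c σ₁ σ₂ z₁ z₂ : ℝ)
    (hκ : 0 ≤ κ) (hc : 0 < c) (hσ : σ₁ > σ₂) (hσ₂ : σ₂ > 0)
    (hz₁ : stdPdf z₁ - z₁ * stdCcdf z₁ = Real.sqrt (σ₁ ^ 2 + κ ^ 2) / σ₁ ^ 2 * c)
    (hz₂ : stdPdf z₂ - z₂ * stdCcdf z₂ = Real.sqrt (σ₂ ^ 2 + κ ^ 2) / σ₂ ^ 2 * c)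
    (hviable : c < σ₂ ^ 2 / Real.sqrt (σ₂ ^ 2 + κ ^ 2) / Real.sqrt (2 * Real.pi)) :
    Real.sqrt (σ₁ ^ 2 + κ ^ 2) * z₁ > Real.sqrt (σ₂ ^ 2 + κ ^ 2) * z₂ := by
  have hσ₁ : 0 < σ₁ := lt_trans hσ₂ hσ
  have hA₁ : (0:ℝ) < σ₁ ^ 2 + κ ^ 2 := by positivity
  have hA₂ : (0:ℝ) < σ₂ ^ 2 + κ ^ 2 := by positivity
  have hs₁ : 0 < Real.sqrt (σ₁ ^ 2 + κ ^ 2) := Real.sqrt_pos.mpr hA₁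
  have hs₂ : 0 < Real.sqrt (σ₂ ^ 2 + κ ^ 2) := Real.sqrt_pos.mpr hA₂
  have hslt : Real.sqrt (σ₂ ^ 2 + κ ^ 2) < Real.sqrt (σ₁ ^ 2 + κ ^ 2) := by
    apply Real.sqrt_lt_sqrt hA₂.le
    nlinarith
  -- g is strictly decreasing
  have hg : Real.sqrt (σ₁ ^ 2 + κ ^ 2) / σ₁ ^ 2 < Real.sqrt (σ₂ ^ 2 + κ ^ 2) / σ₂ ^ 2 := by
    rw [div_lt_div_iff₀ (by positivity) (by positivity)]
    have e1 : Real.sqrt (σ₁ ^ 2 + κ ^ 2) * σ₂ ^ 2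
        = Real.sqrt ((σ₁ ^ 2 + κ ^ 2) * (σ₂ ^ 2) ^ 2) := by
      rw [Real.sqrt_mul hA₁.le, Real.sqrt_sq (by positivity)]
    have e2 : Real.sqrt (σ₂ ^ 2 + κ ^ 2) * σ₁ ^ 2
        = Real.sqrt ((σ₂ ^ 2 + κ ^ 2) * (σ₁ ^ 2) ^ 2) := by
      rw [Real.sqrt_mul hA₂.le, Real.sqrt_sq (by positivity)]
    rw [e1, e2]
    apply Real.sqrt_lt_sqrt (by positivity)
    have h12 : 0 < σ₁ ^ 2 - σ₂ ^ 2 := by nlinarith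
    nlinarith [mul_pos (mul_pos (pow_pos hσ₁ 2) (pow_pos hσ₂ 2)) h12,
      mul_nonneg (sq_nonneg κ) (mul_nonneg h12.le
        (by positivity : (0:ℝ) ≤ σ₁ ^ 2 + σ₂ ^ 2))]
  -- z₂ < z₁
  have hpsi₁ : psiFn z₁ = Real.sqrt (σ₁ ^ 2 + κ ^ 2) / σ₁ ^ 2 * c := hz₁
  have hpsi₂ : psiFn z₂ = Real.sqrt (σ₂ ^ 2 + κ ^ 2) / σ₂ ^ 2 * c := hz₂
  have hzlt : z₂ < z₁ := by
    have : psiFn z₁ < psiFn z₂ := by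
      rw [hpsi₁, hpsi₂]
      exact mul_lt_mul_of_pos_right hg hc
    exact (strictAnti_psiFn.lt_iff_gt).mp this
  -- z₂ > 0
  have hz₂pos : 0 < z₂ := by
    have hlt : psiFn z₂ < psiFn 0 := by
      rw [hpsi₂, psiFn_zero]
      have h2π : 0 < Real.sqrt (2 * Real.pi) := Real.sqrt_pos.mpr (by positivity)
      have key : c * (Real.sqrt (σ₂ ^ 2 + κ ^ 2) * Real.sqrt (2 * Real.pi)) < σ₂ ^ 2 := by
        have h := hviable
        rw [div_div, lt_div_iff₀ (by positivity)] at h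
        exact h
      calc Real.sqrt (σ₂ ^ 2 + κ ^ 2) / σ₂ ^ 2 * c
          = Real.sqrt (σ₂ ^ 2 + κ ^ 2) * c / σ₂ ^ 2 := by ring
        _ < (Real.sqrt (2 * Real.pi))⁻¹ := by
            rw [div_lt_iff₀ (by positivity), inv_mul_eq_div, lt_div_iff₀ h2π]
            nlinarith
    exact (strictAnti_psiFn.lt_iff_gt).mp hlt
  calc Real.sqrt (σ₂ ^ 2 + κ ^ 2) * z₂ < Real.sqrt (σ₁ ^ 2 + κ ^ 2) * z₁ := by nlinarith
  _ = _ := rfl
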